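/- Let (V,B) be a Steiner triple system of order v = 6s+1 or 6s+3 (s ≥ 1), let (Q,·) be the associated Steiner quasigroup (x·x = x, and x·y = z when {x,y,z} ∈ B), and apply the Bose construction on Q × Z_3. Fix a ∈ V and remove the triple {(a,0),(a,1),(a,2)} together with all triples containing any of (a,0),(a,1),(a,2). The resulting structure on the remaining 3(v-1) points is a pentagonal geometry PENT(3, r) with r = (3v-1)/2 - 3, i.e. r = 9s-2 if v ≡ 1 (mod 6) and r = 9s+1 if v ≡ 3 (mod 6); its opposite line pairs are exactly the pairs {(z,0),(z,1),(z,2)}, {(w,0),(w,1),(w,2)} for {a,z,w} ∈ B. -/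

import Mathlib

open scoped Classical

/-- The family of triples of the Bose construction on `Q × ZMod 3`. -/
def BoseTriples {Q : Type} [DecidableEq Q] (mul : Q → Q → Q) (t : Finset (Q × ZMod 3)) : Prop :=
  (∃ x : Q, t = {(x, 0), (x, 1), (x, 2)}) ∨
  (∃ (x y : Q) (i : ZMod 3), x ≠ y ∧ t = {(x, i), (y, i), (mul x y, i + 1)})

/-- The opposite line of `x` relative to a family of lines `L` on a point set `W`. -/
noncomputable def oppLineIn {V : Type} [Fintype V] [DecidableEq V]
    (L : Finset (Finset V)) (W : Finset V) (x : V) : Finset V :=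
  W.filter (fun y => y ≠ x ∧ ∀ l ∈ L, ¬(x ∈ l ∧ y ∈ l))

/-- A pentagonal geometry PENT(k,r) with line family `L` on the point set `W`. -/
def IsPentOn {V : Type} [Fintype V] [DecidableEq V]
    (W : Finset V) (k r : ℕ) (L : Finset (Finset V)) : Prop :=
  (∀ l ∈ L, l ⊆ W ∧ l.card = k) ∧
  (∀ x y : V, x ∈ W → y ∈ W → x ≠ y → (L.filter (fun l => x ∈ l ∧ y ∈ l)).card ≤ 1) ∧
  (∀ x ∈ W, (L.filter (fun l => x ∈ l)).card = r) ∧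
  (∀ x ∈ W, oppLineIn L W x ∈ L)

/-- The lines `l`, `m` form an opposite line pair of the family `L` on point set `W`. -/
def OppPairIn {V : Type} [Fintype V] [DecidableEq V]
    (L : Finset (Finset V)) (W : Finset V) (l m : Finset V) : Prop :=
  l ∈ L ∧ m ∈ L ∧ l ≠ m ∧
    (∀ x ∈ l, oppLineIn L W x = m) ∧ (∀ y ∈ m, oppLineIn L W y = l)

set_option linter.unusedSectionVars false
set_option linter.unusedVariables false


section Helpers
variable {V : Type} [Fintype V] [DecidableEq V]
variable {B : Finset (Finset V)} {mul : V → V → V}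

lemma pair_card_le (x z : V) : ({x, z} : Finset V).card ≤ 2 := by
  have := Finset.card_insert_le x ({z} : Finset V); simpa using this

lemma card3_ne {x y z : V} (h : ({x, y, z} : Finset V).card = 3) :
    x ≠ y ∧ x ≠ z ∧ y ≠ z := by
  refine ⟨?_, ?_, ?_⟩ <;> rintro rfl
  · have hss : ({x, x, z} : Finset V) ⊆ {x, z} := by intro u; simp only [Finset.mem_insert, Finset.mem_singleton]; tauto
    have := (Finset.card_le_card hss).trans (pair_card_le x z); omega
  · have hss : ({x, y, x} : Finset V) ⊆ {x, y} := by intro u; simp only [Finset.mem_insert, Finset.mem_singleton]; tauto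
    have := (Finset.card_le_card hss).trans (pair_card_le x y); omega
  · have hss : ({x, y, y} : Finset V) ⊆ {x, y} := by intro u; simp only [Finset.mem_insert, Finset.mem_singleton]; tauto
    have := (Finset.card_le_card hss).trans (pair_card_le x y); omega

lemma mul_ne (hB3 : ∀ t ∈ B, t.card = 3)
    (hmul : ∀ x y : V, x ≠ y → ({x, y, mul x y} : Finset V) ∈ B)
    {x y : V} (h : x ≠ y) : mul x y ≠ x ∧ mul x y ≠ y :=
  ⟨(card3_ne (hB3 _ (hmul x y h))).2.1.symm, (card3_ne (hB3 _ (hmul x y h))).2.2.symm⟩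

lemma sts_uniq (hSTS : ∀ x y : V, x ≠ y → (B.filter (fun t => x ∈ t ∧ y ∈ t)).card = 1)
    {t t' : Finset V} {x y : V} (ht : t ∈ B) (ht' : t' ∈ B)
    (hx : x ∈ t) (hy : y ∈ t) (hx' : x ∈ t') (hy' : y ∈ t') (hxy : x ≠ y) : t = t' := by
  obtain ⟨u, hu⟩ := Finset.card_eq_one.mp (hSTS x y hxy)
  have h1 : t ∈ B.filter (fun t => x ∈ t ∧ y ∈ t) := Finset.mem_filter.mpr ⟨ht, hx, hy⟩
  have h2 : t' ∈ B.filter (fun t => x ∈ t ∧ y ∈ t) := Finset.mem_filter.mpr ⟨ht', hx', hy'⟩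
  rw [hu, Finset.mem_singleton] at h1 h2
  rw [h1, h2]

lemma eq_mul (hSTS : ∀ x y : V, x ≠ y → (B.filter (fun t => x ∈ t ∧ y ∈ t)).card = 1)
    (hmul : ∀ x y : V, x ≠ y → ({x, y, mul x y} : Finset V) ∈ B)
    {t : Finset V} {x y : V} (ht : t ∈ B) (hx : x ∈ t) (hy : y ∈ t) (hxy : x ≠ y) :
    t = {x, y, mul x y} :=
  sts_uniq hSTS ht (hmul x y hxy) hx hy (by simp) (by simp) hxy

lemma mul_comm'' (hB3 : ∀ t ∈ B, t.card = 3)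
    (hSTS : ∀ x y : V, x ≠ y → (B.filter (fun t => x ∈ t ∧ y ∈ t)).card = 1)
    (hmul : ∀ x y : V, x ≠ y → ({x, y, mul x y} : Finset V) ∈ B)
    {x y : V} (h : x ≠ y) : mul x y = mul y x := by
  have he : ({y, x, mul y x} : Finset V) = {x, y, mul x y} :=
    eq_mul hSTS hmul (hmul y x h.symm) (by simp) (by simp) h
  have hm : mul y x ∈ ({x, y, mul x y} : Finset V) := he ▸ (by simp)
  simp only [Finset.mem_insert, Finset.mem_singleton] at hm
  rcases hm with h1 | h1 | h1
  · exact absurd h1 (mul_ne hB3 hmul h.symm).2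
  · exact absurd h1 (mul_ne hB3 hmul h.symm).1
  · exact h1.symm ▸ rfl

lemma mul_mul (hB3 : ∀ t ∈ B, t.card = 3)
    (hSTS : ∀ x y : V, x ≠ y → (B.filter (fun t => x ∈ t ∧ y ∈ t)).card = 1)
    (hmul : ∀ x y : V, x ≠ y → ({x, y, mul x y} : Finset V) ∈ B)
    {x y : V} (h : x ≠ y) : mul x (mul x y) = y := by
  have hw : x ≠ mul x y := ((mul_ne hB3 hmul h).1).symm
  have he : ({x, y, mul x y} : Finset V) = {x, mul x y, mul x (mul x y)} :=
    eq_mul hSTS hmul (hmul x y h) (by simp) (by simp) hw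
  have hm : y ∈ ({x, mul x y, mul x (mul x y)} : Finset V) := he ▸ (by simp)
  simp only [Finset.mem_insert, Finset.mem_singleton] at hm
  rcases hm with h1 | h1 | h1
  · exact absurd h1.symm h
  · exact absurd h1.symm (mul_ne hB3 hmul h).2
  · exact h1.symm

lemma mul_cancel (hB3 : ∀ t ∈ B, t.card = 3)
    (hSTS : ∀ x y : V, x ≠ y → (B.filter (fun t => x ∈ t ∧ y ∈ t)).card = 1)
    (hmul : ∀ x y : V, x ≠ y → ({x, y, mul x y} : Finset V) ∈ B)
    {x y y' : V} (h : x ≠ y) (h' : x ≠ y') (he : mul x y = mul x y') : y = y' := by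
  have := mul_mul hB3 hSTS hmul h
  rw [he, mul_mul hB3 hSTS hmul h'] at this
  exact this.symm

end Helpers

section Bose
variable {V : Type} [Fintype V] [DecidableEq V]
variable {B : Finset (Finset V)} {mul : V → V → V}

/-- canonical Bose line through two distinct points -/
def canonLine (mul : V → V → V) (x : V) (i : ZMod 3) (y : V) (j : ZMod 3) :
    Finset (V × ZMod 3) :=
  if x = y then {(x, 0), (x, 1), (x, 2)}
  else if j = i then {(x, i), (y, i), (mul x y, i + 1)}
  else if j = i + 1 then {(x, i), (mul x y, i), (y, i + 1)}
  else {(y, j), (mul x y, j), (x, j + 1)}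

lemma zmod3_cases (i j : ZMod 3) : j = i ∨ j = i + 1 ∨ i = j + 1 := by revert i j; decide

lemma zmod3_all (j : ZMod 3) : j = 0 ∨ j = 1 ∨ j = 2 := by revert j; decide

lemma zmod3_succ_ne (i : ZMod 3) : i + 1 ≠ i := by revert i; decide

lemma swap12 {α : Type} [DecidableEq α] (A B C : α) :
    ({A, B, C} : Finset α) = {B, A, C} := by
  ext u; simp only [Finset.mem_insert, Finset.mem_singleton]; tauto

lemma canon_spec
    (hB3 : ∀ t ∈ B, t.card = 3)
    (hSTS : ∀ x y : V, x ≠ y → (B.filter (fun t => x ∈ t ∧ y ∈ t)).card = 1)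
    (hmul : ∀ x y : V, x ≠ y → ({x, y, mul x y} : Finset V) ∈ B)
    (x : V) (i : ZMod 3) (y : V) (j : ZMod 3) (hne : (x, i) ≠ (y, j)) :
    BoseTriples mul (canonLine mul x i y j) ∧
      (x, i) ∈ canonLine mul x i y j ∧ (y, j) ∈ canonLine mul x i y j := by
  unfold canonLine
  by_cases hxy : x = y
  · subst hxy
    rw [if_pos rfl]
    refine ⟨Or.inl ⟨x, rfl⟩, ?_, ?_⟩
    · rcases zmod3_all i with h | h | h <;> subst h <;> simp
    · rcases zmod3_all j with h | h | h <;> subst h <;> simp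
  · rw [if_neg hxy]
    by_cases hji : j = i
    · subst hji
      rw [if_pos rfl]
      exact ⟨Or.inr ⟨x, y, j, hxy, rfl⟩, by simp, by simp⟩
    · rw [if_neg hji]
      by_cases hj1 : j = i + 1
      · subst hj1
        rw [if_pos rfl]
        refine ⟨Or.inr ⟨x, mul x y, i, ((mul_ne hB3 hmul hxy).1).symm.symm.symm, ?_⟩, by simp, by simp⟩
        rw [mul_mul hB3 hSTS hmul hxy]
      · rw [if_neg hj1]
        have hij1 : i = j + 1 := by
          rcases zmod3_cases i j with h | h | h
          · exact absurd h hji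
          · exact absurd h hj1
          · exact h
        have hyx : y ≠ x := fun h => hxy h.symm
        refine ⟨Or.inr ⟨y, mul x y, j, ?_, ?_⟩, ?_, by simp⟩
        · exact ((mul_ne hB3 hmul hxy).2).symm.symm.symm
        · have hmm : mul y (mul x y) = x := by
            rw [mul_comm'' hB3 hSTS hmul hxy]
            exact mul_mul hB3 hSTS hmul hyx
          rw [hmm]
        · subst hij1; simp
end Bose

section Bose2
variable {V : Type} [Fintype V] [DecidableEq V]
variable {B : Finset (Finset V)} {mul : V → V → V}

lemma zmod3_ne2 (k : ZMod 3) : k ≠ k + 1 + 1 := by revert k; decide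

lemma canon_classify
    (hB3 : ∀ t ∈ B, t.card = 3)
    (hSTS : ∀ x y : V, x ≠ y → (B.filter (fun t => x ∈ t ∧ y ∈ t)).card = 1)
    (hmul : ∀ x y : V, x ≠ y → ({x, y, mul x y} : Finset V) ∈ B)
    {t : Finset (V × ZMod 3)} (ht : BoseTriples mul t)
    {x y : V} {i j : ZMod 3}
    (hx : (x, i) ∈ t) (hy : (y, j) ∈ t) (hne : (x, i) ≠ (y, j)) :
    t = canonLine mul x i y j := by
  rcases ht with ⟨u, rfl⟩ | ⟨u, w, k, huw, rfl⟩
  · simp only [Finset.mem_insert, Finset.mem_singleton, Prod.mk.injEq] at hx hy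
    have hxu : x = u := by tauto
    have hyu : y = u := by tauto
    subst hxu; subst hyu
    unfold canonLine
    rw [if_pos rfl]
  · simp only [Finset.mem_insert, Finset.mem_singleton, Prod.mk.injEq] at hx hy
    have hwu : w ≠ u := huw.symm
    have hmu : mul u w ≠ u := (mul_ne hB3 hmul huw).1
    have hmw : mul u w ≠ w := (mul_ne hB3 hmul huw).2
    have h1 : mul w (mul u w) = u := by
      rw [mul_comm'' hB3 hSTS hmul huw]
      exact mul_mul hB3 hSTS hmul hwu
    have h2 : mul (mul u w) u = w := by
      rw [← mul_comm'' hB3 hSTS hmul hmu.symm]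
      exact mul_mul hB3 hSTS hmul huw
    have h3 : mul (mul u w) w = u := by
      rw [← mul_comm'' hB3 hSTS hmul hmw.symm]
      exact h1
    rcases hx with ⟨rfl, rfl⟩ | ⟨rfl, rfl⟩ | ⟨rfl, rfl⟩ <;>
      rcases hy with ⟨rfl, rfl⟩ | ⟨rfl, rfl⟩ | ⟨rfl, rfl⟩
    -- (u,u)
    · exact absurd rfl hne
    -- (u,w)
    · unfold canonLine
      rw [if_neg huw, if_pos rfl]
    -- (u,top)
    · unfold canonLine
      rw [if_neg hmu.symm, if_neg (zmod3_succ_ne i), if_pos rfl,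
        mul_mul hB3 hSTS hmul huw]
    -- (w,u)
    · unfold canonLine
      rw [if_neg hwu, if_pos rfl, mul_comm'' hB3 hSTS hmul hwu]
      exact swap12 _ _ _
    -- (w,w)
    · exact absurd rfl hne
    -- (w,top)
    · unfold canonLine
      rw [if_neg hmw.symm, if_neg (zmod3_succ_ne i), if_pos rfl, h1]
      exact swap12 _ _ _
    -- (top,u)
    · unfold canonLine
      rw [if_neg hmu, if_neg (zmod3_succ_ne j).symm, if_neg (zmod3_ne2 j), h2]
    -- (top,w)
    · unfold canonLine
      rw [if_neg hmw, if_neg (zmod3_succ_ne j).symm, if_neg (zmod3_ne2 j), h3]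
      exact swap12 _ _ _
    -- (top,top)
    · exact absurd rfl hne

lemma bose_unique
    (hB3 : ∀ t ∈ B, t.card = 3)
    (hSTS : ∀ x y : V, x ≠ y → (B.filter (fun t => x ∈ t ∧ y ∈ t)).card = 1)
    (hmul : ∀ x y : V, x ≠ y → ({x, y, mul x y} : Finset V) ∈ B)
    {t t' : Finset (V × ZMod 3)} (ht : BoseTriples mul t) (ht' : BoseTriples mul t')
    {p q : V × ZMod 3} (hp : p ∈ t) (hq : q ∈ t) (hp' : p ∈ t') (hq' : q ∈ t')
    (hpq : p ≠ q) : t = t' := by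
  obtain ⟨x, i⟩ := p
  obtain ⟨y, j⟩ := q
  rw [canon_classify hB3 hSTS hmul ht hp hq hpq,
    canon_classify hB3 hSTS hmul ht' hp' hq' hpq]

end Bose2

section Bose3
variable {V : Type} [Fintype V] [DecidableEq V]
variable {B : Finset (Finset V)} {mul : V → V → V} {a : V}

lemma bose_card
    (hB3 : ∀ t ∈ B, t.card = 3)
    (hmul : ∀ x y : V, x ≠ y → ({x, y, mul x y} : Finset V) ∈ B)
    {t : Finset (V × ZMod 3)} (ht : BoseTriples mul t) : t.card = 3 := by
  rcases ht with ⟨u, rfl⟩ | ⟨u, w, k, huw, rfl⟩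
  · refine Finset.card_eq_three.mpr ⟨_, _, _, ?_, ?_, ?_, rfl⟩
    · exact fun h => (by decide : ¬ (0 : ZMod 3) = 1) (congrArg Prod.snd h)
    · exact fun h => (by decide : ¬ (0 : ZMod 3) = 2) (congrArg Prod.snd h)
    · exact fun h => (by decide : ¬ (1 : ZMod 3) = 2) (congrArg Prod.snd h)
  · have hmu : mul u w ≠ u := (mul_ne hB3 hmul huw).1
    have hmw : mul u w ≠ w := (mul_ne hB3 hmul huw).2
    refine Finset.card_eq_three.mpr ⟨_, _, _, ?_, ?_, ?_, rfl⟩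
    · exact fun h => huw (congrArg Prod.fst h)
    · exact fun h => (zmod3_succ_ne k) (congrArg Prod.snd h).symm
    · exact fun h => (zmod3_succ_ne k) (congrArg Prod.snd h).symm

lemma mul_ne_a
    (hB3 : ∀ t ∈ B, t.card = 3)
    (hSTS : ∀ x y : V, x ≠ y → (B.filter (fun t => x ∈ t ∧ y ∈ t)).card = 1)
    (hmul : ∀ x y : V, x ≠ y → ({x, y, mul x y} : Finset V) ∈ B)
    {x y : V} (hxy : x ≠ y) (hyb : y ≠ mul x a) : mul x y ≠ a := by
  intro h
  apply hyb
  rw [← h]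
  exact (mul_mul hB3 hSTS hmul hxy).symm

lemma canon_avoid
    (hB3 : ∀ t ∈ B, t.card = 3)
    (hSTS : ∀ x y : V, x ≠ y → (B.filter (fun t => x ∈ t ∧ y ∈ t)).card = 1)
    (hmul : ∀ x y : V, x ≠ y → ({x, y, mul x y} : Finset V) ∈ B)
    {x y : V} {i j : ZMod 3} (hxa : x ≠ a) (hya : y ≠ a)
    (hm : x ≠ y → mul x y ≠ a) :
    ∀ k : ZMod 3, (a, k) ∉ canonLine mul x i y j := by
  intro k hk
  unfold canonLine at hk
  by_cases hxy : x = y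
  · rw [if_pos hxy] at hk
    simp only [Finset.mem_insert, Finset.mem_singleton, Prod.mk.injEq] at hk
    rcases hk with ⟨h, _⟩ | ⟨h, _⟩ | ⟨h, _⟩ <;> exact hxa h.symm
  · rw [if_neg hxy] at hk
    split_ifs at hk <;>
    · simp only [Finset.mem_insert, Finset.mem_singleton, Prod.mk.injEq] at hk
      rcases hk with ⟨h, _⟩ | ⟨h, _⟩ | ⟨h, _⟩ <;>
        first
          | exact hxa h.symm
          | exact hya h.symm
          | exact (hm hxy) h.symm

lemma canon_contains_mul {x y : V} {i j : ZMod 3} (hxy : x ≠ y) :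
    ∃ k, (mul x y, k) ∈ canonLine mul x i y j := by
  unfold canonLine
  rw [if_neg hxy]
  split_ifs
  · exact ⟨i + 1, by simp⟩
  · exact ⟨i, by simp⟩
  · exact ⟨j, by simp⟩

lemma no_common_line
    (hB3 : ∀ t ∈ B, t.card = 3)
    (hSTS : ∀ x y : V, x ≠ y → (B.filter (fun t => x ∈ t ∧ y ∈ t)).card = 1)
    (hmul : ∀ x y : V, x ≠ y → ({x, y, mul x y} : Finset V) ∈ B)
    {x : V} {i j : ZMod 3} (hxa : x ≠ a)
    {l : Finset (V × ZMod 3)} (hl : BoseTriples mul l) (hla : ∀ k : ZMod 3, (a, k) ∉ l)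
    (hxl : (x, i) ∈ l) : (mul x a, j) ∉ l := by
  intro hbl
  have hxb : x ≠ mul x a := ((mul_ne hB3 hmul hxa).1).symm
  have hne : (x, i) ≠ (mul x a, j) := fun h => hxb (congrArg Prod.fst h)
  have hcl := canon_classify hB3 hSTS hmul hl hxl hbl hne
  obtain ⟨k, hk⟩ := canon_contains_mul (mul := mul) (i := i) (j := j) hxb
  rw [mul_mul hB3 hSTS hmul hxa] at hk
  rw [hcl] at hla
  exact hla k hk

end Bose3

section Bose4
variable {V : Type} [Fintype V] [DecidableEq V]
variable {B : Finset (Finset V)} {mul : V → V → V} {a : V}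
variable {W : Finset (V × ZMod 3)} {L : Finset (Finset (V × ZMod 3))}

lemma mem_L_iff
    (hL : L = Finset.univ.filter
      (fun t => BoseTriples mul t ∧ ∀ i : ZMod 3, (a, i) ∉ t))
    {t : Finset (V × ZMod 3)} :
    t ∈ L ↔ BoseTriples mul t ∧ ∀ k : ZMod 3, (a, k) ∉ t := by
  subst hL; simp

lemma pline_mem_L
    (hL : L = Finset.univ.filter
      (fun t => BoseTriples mul t ∧ ∀ i : ZMod 3, (a, i) ∉ t))
    {x : V} (hxa : x ≠ a) :
    ({(x, 0), (x, 1), (x, 2)} : Finset (V × ZMod 3)) ∈ L := by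
  rw [mem_L_iff hL]
  refine ⟨Or.inl ⟨x, rfl⟩, ?_⟩
  intro k hk
  simp only [Finset.mem_insert, Finset.mem_singleton, Prod.mk.injEq] at hk
  rcases hk with ⟨h, _⟩ | ⟨h, _⟩ | ⟨h, _⟩ <;> exact hxa h.symm

lemma opp_line_eq
    (hB3 : ∀ t ∈ B, t.card = 3)
    (hSTS : ∀ x y : V, x ≠ y → (B.filter (fun t => x ∈ t ∧ y ∈ t)).card = 1)
    (hmul : ∀ x y : V, x ≠ y → ({x, y, mul x y} : Finset V) ∈ B)
    (hW : W = Finset.univ.filter (fun p => p.1 ≠ a))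
    (hL : L = Finset.univ.filter
      (fun t => BoseTriples mul t ∧ ∀ i : ZMod 3, (a, i) ∉ t))
    {x : V} (hxa : x ≠ a) (i : ZMod 3) :
    oppLineIn L W (x, i) = {(mul x a, 0), (mul x a, 1), (mul x a, 2)} := by
  have hba : mul x a ≠ a := (mul_ne hB3 hmul hxa).2
  have hbx : mul x a ≠ x := (mul_ne hB3 hmul hxa).1
  ext ⟨y, j⟩
  rw [oppLineIn, Finset.mem_filter]
  constructor
  · rintro ⟨hyW, hne, hno⟩
    have hya : y ≠ a := by
      rw [hW, Finset.mem_filter] at hyW; exact hyW.2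
    have hyb : y = mul x a := by
      by_contra hyb
      have hne' : (x, i) ≠ (y, j) := fun h => hne h.symm
      have hspec := canon_spec hB3 hSTS hmul x i y j hne'
      have havoid : ∀ k : ZMod 3, (a, k) ∉ canonLine mul x i y j :=
        canon_avoid hB3 hSTS hmul hxa hya
          (fun hxy => mul_ne_a hB3 hSTS hmul hxy hyb)
      exact hno _ ((mem_L_iff hL).mpr ⟨hspec.1, havoid⟩) ⟨hspec.2.1, hspec.2.2⟩
    subst hyb
    rcases zmod3_all j with rfl | rfl | rfl <;> simp
  · intro hm
    have hyb : y = mul x a := by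
      simp only [Finset.mem_insert, Finset.mem_singleton, Prod.mk.injEq] at hm
      tauto
    subst hyb
    refine ⟨?_, ?_, ?_⟩
    · rw [hW, Finset.mem_filter]; exact ⟨Finset.mem_univ _, hba⟩
    · exact fun h => hbx (congrArg Prod.fst h)
    · rintro l hl ⟨hxl, hyl⟩
      rw [mem_L_iff hL] at hl
      exact no_common_line hB3 hSTS hmul hxa hl.1 hl.2 hxl hyl

lemma repl
    (hB3 : ∀ t ∈ B, t.card = 3)
    (hSTS : ∀ x y : V, x ≠ y → (B.filter (fun t => x ∈ t ∧ y ∈ t)).card = 1)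
    (hmul : ∀ x y : V, x ≠ y → ({x, y, mul x y} : Finset V) ∈ B)
    (hL : L = Finset.univ.filter
      (fun t => BoseTriples mul t ∧ ∀ i : ZMod 3, (a, i) ∉ t))
    {v : ℕ} (hv : Fintype.card V = v) (hv7 : 7 ≤ v)
    {x : V} (hxa : x ≠ a) (i : ZMod 3) :
    2 * (L.filter (fun l => (x, i) ∈ l)).card + 7 = 3 * v := by
  have hba : mul x a ≠ a := (mul_ne hB3 hmul hxa).2
  have hbx : mul x a ≠ x := (mul_ne hB3 hmul hxa).1
  set b := mul x a with hb
  set Lp := L.filter (fun l => (x, i) ∈ l) with hLp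
  set T := ((Finset.univ \ {a, b}) ×ˢ (Finset.univ : Finset (ZMod 3))).erase (x, i) with hT
  have hmemLp : ∀ {l}, l ∈ Lp ↔ (BoseTriples mul l ∧ ∀ k : ZMod 3, (a, k) ∉ l) ∧ (x, i) ∈ l := by
    intro l
    rw [hLp, Finset.mem_filter, mem_L_iff hL]
  have hTU : T = Lp.biUnion (fun l => l.erase (x, i)) := by
    ext ⟨y, j⟩
    rw [hT, Finset.mem_erase, Finset.mem_product, Finset.mem_sdiff, Finset.mem_biUnion]
    simp only [Finset.mem_univ, true_and, and_true, Finset.mem_insert, Finset.mem_singleton]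
    constructor
    · rintro ⟨hne, hnab⟩
      push_neg at hnab
      obtain ⟨hya, hyb⟩ := hnab
      have hne' : (x, i) ≠ (y, j) := fun h => hne h.symm
      have hspec := canon_spec hB3 hSTS hmul x i y j hne'
      have havoid : ∀ k : ZMod 3, (a, k) ∉ canonLine mul x i y j :=
        canon_avoid hB3 hSTS hmul hxa hya
          (fun hxy => mul_ne_a hB3 hSTS hmul hxy hyb)
      refine ⟨canonLine mul x i y j, hmemLp.mpr ⟨⟨hspec.1, havoid⟩, hspec.2.1⟩, ?_⟩
      exact Finset.mem_erase.mpr ⟨hne, hspec.2.2⟩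
    · rintro ⟨l, hl, hyl⟩
      obtain ⟨⟨hlB, hla⟩, hxl⟩ := hmemLp.mp hl
      have hyl' := Finset.mem_of_mem_erase hyl
      have hyne := Finset.ne_of_mem_erase hyl
      refine ⟨hyne, ?_⟩
      push_neg
      constructor
      · intro h; subst h; exact hla j hyl'
      · intro h; subst h
        exact no_common_line hB3 hSTS hmul hxa hlB hla hxl hyl'
  have hdisj : ∀ l ∈ Lp, ∀ m ∈ Lp, l ≠ m →
      Disjoint (l.erase (x, i)) (m.erase (x, i)) := by
    intro l hl m hm hlm
    rw [Finset.disjoint_left]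
    intro q hql hqm
    obtain ⟨⟨hlB, _⟩, hxl⟩ := hmemLp.mp hl
    obtain ⟨⟨hmB, _⟩, hxm⟩ := hmemLp.mp hm
    exact hlm (bose_unique hB3 hSTS hmul hlB hmB hxl (Finset.mem_of_mem_erase hql)
      hxm (Finset.mem_of_mem_erase hqm) (Ne.symm (Finset.ne_of_mem_erase hql)))
  have hsum : T.card = Lp.card * 2 := by
    rw [hTU, Finset.card_biUnion hdisj]
    refine Finset.sum_const_nat ?_
    intro l hl
    obtain ⟨⟨hlB, _⟩, hxl⟩ := hmemLp.mp hl
    rw [Finset.card_erase_of_mem hxl, bose_card hB3 hmul hlB]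
  have hcardT : T.card = (v - 2) * 3 - 1 := by
    have h3 : (Finset.univ : Finset (ZMod 3)).card = 3 := by
      rw [Finset.card_univ]; exact ZMod.card 3
    rw [hT, Finset.card_erase_of_mem, Finset.card_product]
    · rw [h3, Finset.card_sdiff_of_subset (Finset.subset_univ _), Finset.card_univ, hv,
        Finset.card_pair (fun h => hba h.symm)]
    · rw [Finset.mem_product, Finset.mem_sdiff]
      refine ⟨⟨Finset.mem_univ _, ?_⟩, Finset.mem_univ _⟩
      simp only [Finset.mem_insert, Finset.mem_singleton]
      push_neg
      exact ⟨hxa, fun h => hbx h.symm⟩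
  omega

end Bose4

/-- Given a Steiner triple system (V,B) of order v = 6s+1 or 6s+3 (s ≥ 1)
with its Steiner quasigroup, apply the Bose construction on V × Z₃ and delete the three
points (a,0), (a,1), (a,2) (for a fixed a ∈ V) together with all triples meeting them.
The result is a pentagonal geometry PENT(3,r) with 2r + 7 = 3v, i.e. r = 9s-2 if
v ≡ 1 (mod 6) and r = 9s+1 if v ≡ 3 (mod 6), whose opposite line pairs are exactly the
pairs {(z,0),(z,1),(z,2)}, {(w,0),(w,1),(w,2)} with {a,z,w} ∈ B. -/
theorem stmt15 (V : Type) [Fintype V] [DecidableEq V] (v s : ℕ)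
    (hv : Fintype.card V = v) (hs : 1 ≤ s) (hvs : v = 6 * s + 1 ∨ v = 6 * s + 3)
    (B : Finset (Finset V))
    (hB3 : ∀ t ∈ B, t.card = 3)
    (hSTS : ∀ x y : V, x ≠ y → (B.filter (fun t => x ∈ t ∧ y ∈ t)).card = 1)
    (mul : V → V → V)
    (hidem : ∀ x : V, mul x x = x)
    (hmul : ∀ x y : V, x ≠ y → ({x, y, mul x y} : Finset V) ∈ B)
    (a : V) (r : ℕ) (hr : 2 * r + 7 = 3 * v)
    (W : Finset (V × ZMod 3)) (hW : W = Finset.univ.filter (fun p => p.1 ≠ a))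
    (L : Finset (Finset (V × ZMod 3)))
    (hL : L = Finset.univ.filter
      (fun t => BoseTriples mul t ∧ ∀ i : ZMod 3, (a, i) ∉ t)) :
    IsPentOn W 3 r L ∧
    (v = 6 * s + 1 → r + 2 = 9 * s) ∧
    (v = 6 * s + 3 → r = 9 * s + 1) ∧
    (∀ l m : Finset (V × ZMod 3), OppPairIn L W l m ↔
      ∃ z w : V, z ≠ w ∧ ({a, z, w} : Finset V) ∈ B ∧
        l = {(z, 0), (z, 1), (z, 2)} ∧ m = {(w, 0), (w, 1), (w, 2)}) := by
  have hv7 : 7 ≤ v := by omega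
  have hWmem : ∀ {q : V × ZMod 3}, q ∈ W ↔ q.1 ≠ a := by
    intro q; rw [hW, Finset.mem_filter]; simp
  -- axiom 1
  have ax1 : ∀ l ∈ L, l ⊆ W ∧ l.card = 3 := by
    intro l hl
    rw [mem_L_iff hL] at hl
    refine ⟨?_, bose_card hB3 hmul hl.1⟩
    intro q hq
    rw [hWmem]
    intro h
    apply hl.2 q.2
    have hqa : (a, q.2) = q := by rw [← h]
    rw [hqa]; exact hq
  -- axiom 2
  have ax2 : ∀ p q : V × ZMod 3, p ∈ W → q ∈ W → p ≠ q →
      (L.filter (fun l => p ∈ l ∧ q ∈ l)).card ≤ 1 := by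
    intro p q _ _ hpq
    rw [Finset.card_le_one]
    intro l hl m hm
    rw [Finset.mem_filter] at hl hm
    have hlB := ((mem_L_iff hL).mp hl.1).1
    have hmB := ((mem_L_iff hL).mp hm.1).1
    exact bose_unique hB3 hSTS hmul hlB hmB hl.2.1 hl.2.2 hm.2.1 hm.2.2 hpq
  -- axiom 3
  have ax3 : ∀ p ∈ W, (L.filter (fun l => p ∈ l)).card = r := by
    rintro ⟨x, i⟩ hp
    have hxa : x ≠ a := hWmem.mp hp
    have := repl hB3 hSTS hmul hL hv hv7 hxa i
    omega
  -- axiom 4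
  have ax4 : ∀ p ∈ W, oppLineIn L W p ∈ L := by
    rintro ⟨x, i⟩ hp
    have hxa : x ≠ a := hWmem.mp hp
    rw [opp_line_eq hB3 hSTS hmul hW hL hxa i]
    exact pline_mem_L hL (mul_ne hB3 hmul hxa).2
  refine ⟨⟨ax1, ax2, ax3, ax4⟩, by omega, by omega, ?_⟩
  intro l m
  constructor
  · rintro ⟨hlL, hmL, hlm, hol, hom⟩
    have hlne : l.Nonempty := by
      rw [← Finset.card_pos, (ax1 l hlL).2]; norm_num
    obtain ⟨⟨x, i⟩, hp⟩ := hlne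
    have hxa : x ≠ a := hWmem.mp ((ax1 l hlL).1 hp)
    set b := mul x a with hb
    have hba : b ≠ a := (mul_ne hB3 hmul hxa).2
    have hm_eq : m = ({(b, 0), (b, 1), (b, 2)} : Finset (V × ZMod 3)) := by
      rw [← hol (x, i) hp, opp_line_eq hB3 hSTS hmul hW hL hxa i]
    have hbm : ((b, 0) : V × ZMod 3) ∈ m := by rw [hm_eq]; simp
    have hl_eq : l = ({(mul b a, 0), (mul b a, 1), (mul b a, 2)} : Finset (V × ZMod 3)) := by
      rw [← hom (b, 0) hbm, opp_line_eq hB3 hSTS hmul hW hL hba 0]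
    refine ⟨mul b a, b, (mul_ne hB3 hmul hba).1, ?_, hl_eq, hm_eq⟩
    have hBt := hmul b a hba
    have hset : ({a, mul b a, b} : Finset V) = {b, a, mul b a} := by
      ext u; simp only [Finset.mem_insert, Finset.mem_singleton]; tauto
    rw [hset]; exact hBt
  · rintro ⟨z, w, hzw, hBt, rfl, rfl⟩
    have hcn := card3_ne (hB3 _ hBt)
    have haz : z ≠ a := hcn.1.symm
    have haw : w ≠ a := hcn.2.1.symm
    have hwz : w = mul z a := by
      have he : ({a, z, w} : Finset V) = {z, a, mul z a} :=
        eq_mul hSTS hmul hBt (by simp) (by simp) haz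
      have hw : w ∈ ({z, a, mul z a} : Finset V) := he ▸ (by simp)
      simp only [Finset.mem_insert, Finset.mem_singleton] at hw
      rcases hw with h | h | h
      · exact absurd h.symm hzw
      · exact absurd h haw
      · exact h
    have hzw' : z = mul w a := by
      have he : ({a, z, w} : Finset V) = {w, a, mul w a} :=
        eq_mul hSTS hmul hBt (by simp) (by simp) haw
      have hz : z ∈ ({w, a, mul w a} : Finset V) := he ▸ (by simp)
      simp only [Finset.mem_insert, Finset.mem_singleton] at hz
      rcases hz with h | h | h
      · exact absurd h hzw
      · exact absurd h haz
      · exact h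
    refine ⟨pline_mem_L hL haz, pline_mem_L hL haw, ?_, ?_, ?_⟩
    · intro h
      have : ((z, 0) : V × ZMod 3) ∈
          ({(w, 0), (w, 1), (w, 2)} : Finset (V × ZMod 3)) := h ▸ (by simp)
      simp only [Finset.mem_insert, Finset.mem_singleton, Prod.mk.injEq] at this
      rcases this with ⟨h', _⟩ | ⟨h', _⟩ | ⟨h', _⟩ <;> exact hzw h'
    · intro p hp
      simp only [Finset.mem_insert, Finset.mem_singleton] at hp
      rcases hp with rfl | rfl | rfl <;>
        rw [opp_line_eq hB3 hSTS hmul hW hL haz, ← hwz]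
    · intro p hp
      simp only [Finset.mem_insert, Finset.mem_singleton] at hp
      rcases hp with rfl | rfl | rfl <;>
        rw [opp_line_eq hB3 hSTS hmul hW hL haw, ← hzw']
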